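/- There exist constants c₁ > 0 and c₂ > 0 such that for every ε ∈ [0,1/4], c₁·ε² ≤ localPart(P^{3,ε}) ≤ c₂·ε², where localPart(P^{3,ε}) denotes the local part of the system of three isotropic ε-PRBs. That is, the local part of three isotropic ε-PRBs is of order Θ(ε²). -/

import Mathlib

open Finset

/-- n-bit strings. -/
abbrev Bits (n : ℕ) := Fin n → Bool

/-- A bipartite conditional "box" on n-bit alphabets: `P x y u v` is the
probability of outputs `(x, y)` given inputs `(u, v)`. -/
abbrev Box (n : ℕ) := Bits n → Bits n → Bits n → Bits n → ℝ

/-- `P` is a bipartite conditional probability distribution. -/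
def IsBox {n : ℕ} (P : Box n) : Prop :=
  (∀ x y u v, 0 ≤ P x y u v) ∧
  (∀ u v, ∑ x : Bits n, ∑ y : Bits n, P x y u v = 1)

/-- `P` is non-signalling. -/
def NonSignalling {n : ℕ} (P : Box n) : Prop :=
  (∀ y v u u', ∑ x : Bits n, P x y u v = ∑ x : Bits n, P x y u' v) ∧
  (∀ x u v v', ∑ y : Bits n, P x y u v = ∑ y : Bits n, P x y u v')

/-- The local deterministic box given by response functions `f` (Alice) and `g` (Bob). -/
def detBox {n : ℕ} (f g : Bits n → Bits n) : Box n :=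
  fun x y u v => if x = f u ∧ y = g v then 1 else 0

/-- `P` is local deterministic. -/
def IsLocalDet {n : ℕ} (P : Box n) : Prop :=
  ∃ f g : Bits n → Bits n, P = detBox f g

/-- `P` is local: a convex combination of local deterministic boxes. -/
def IsLocal {n : ℕ} (P : Box n) : Prop :=
  ∃ w : (Bits n → Bits n) × (Bits n → Bits n) → ℝ,
    (∀ fg, 0 ≤ w fg) ∧ (∑ fg, w fg = 1) ∧
    (∀ x y u v, P x y u v =
      ∑ fg : (Bits n → Bits n) × (Bits n → Bits n), w fg * detBox fg.1 fg.2 x y u v)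

/-- The local part of `P`: the maximal weight `p` such that `P` is a convex
combination of a local box (weight `p`) and a non-signalling box (weight `1 - p`). -/
noncomputable def localPart {n : ℕ} (P : Box n) : ℝ :=
  sSup {p : ℝ | 0 ≤ p ∧ p ≤ 1 ∧
    ∃ PL PNS : Box n, IsBox PL ∧ IsLocal PL ∧ IsBox PNS ∧ NonSignalling PNS ∧
      ∀ x y u v, P x y u v = p * PL x y u v + (1 - p) * PNS x y u v}

/-- Single-copy isotropic ε-PRB entries. -/
noncomputable def isoPRB1 (ε : ℝ) (x y u v : Bool) : ℝ :=
  if xor x y = (u && v) then (1 - ε) / 2 else ε / 2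

/-- The system of n independent isotropic ε-PRBs. -/
noncomputable def isoPRB (n : ℕ) (ε : ℝ) : Box n :=
  fun x y u v => ∏ i : Fin n, isoPRB1 ε (x i) (y i) (u i) (v i)

/-- Single-copy maximally biased δ-PRB entries. -/
noncomputable def biasedPRB1 (δ : ℝ) (x y u v : Bool) : ℝ :=
  if u && v then
    match x, y with
    | false, false => 0
    | true,  false => 1 / 2 - δ / 2
    | false, true  => 1 / 2 + δ / 2
    | true,  true  => 0
  else
    match x, y with
    | false, false => 1 / 2 - δ / 2
    | true,  false => 0
    | false, true  => δ
    | true,  true  => 1 / 2 - δ / 2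

/-- The system of n independent maximally biased δ-PRBs. -/
noncomputable def biasedPRB (n : ℕ) (δ : ℝ) : Box n :=
  fun x y u v => ∏ i : Fin n, biasedPRB1 δ (x i) (y i) (u i) (v i)

/-! ### Auxiliary development for the proof -/

namespace S8

abbrev B := Bits 3

/-- There is an error at coordinate `i`. -/
def errAt (x y u v : B) (i : Fin 3) : Prop := xor (x i) (y i) ≠ (u i && v i)

instance (x y u v : B) : DecidablePred (errAt x y u v) := fun i => by
  unfold errAt; infer_instance

/-- Number of coordinates in error. -/
def errcount (x y u v : B) : ℕ := (univ.filter (errAt x y u v)).card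

lemma errcount_eq (x y u v : B) : errcount x y u v =
    (if errAt x y u v 0 then 1 else 0) + (if errAt x y u v 1 then 1 else 0)
      + (if errAt x y u v 2 then 1 else 0) := by
  rw [errcount, Finset.card_filter, Fin.sum_univ_three]

def vF : B := fun _ => false
def vT : B := fun _ => true

/-- Key combinatorial lemma: every deterministic strategy makes at least two
errors on some input pair. -/
lemma keyLemma (f g : B → B) : ∃ u v : B, 2 ≤ errcount (f u) (g v) u v := by
  classical
  set y0 := g vF with hy0
  set y1 := g vT with hy1
  set u0 : B := fun i => !(xor (y0 i) (y1 i)) with hu0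
  have hcov : ∀ i : Fin 3, errAt (f u0) y0 u0 vF i ∨ errAt (f u0) y1 u0 vT i := by
    intro i
    simp only [errAt, vF, vT, Bool.and_false, Bool.and_true]
    have hu : u0 i = !(xor (y0 i) (y1 i)) := rfl
    rw [hu]
    generalize f u0 i = a
    generalize y0 i = b
    generalize y1 i = c
    cases a <;> cases b <;> cases c <;> simp
  have h0 := errcount_eq (f u0) y0 u0 vF
  have h1 := errcount_eq (f u0) y1 u0 vT
  have hper : ∀ i : Fin 3,
      1 ≤ (if errAt (f u0) y0 u0 vF i then 1 else 0) +
          (if errAt (f u0) y1 u0 vT i then 1 else 0) := by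
    intro i
    rcases hcov i with h | h <;> simp [h]
  have c0 := hper 0
  have c1 := hper 1
  have c2 := hper 2
  by_cases h : 2 ≤ errcount (f u0) y0 u0 vF
  · exact ⟨u0, vF, h⟩
  · refine ⟨u0, vT, ?_⟩
    show 2 ≤ errcount (f u0) y1 u0 vT
    omega

variable {ε : ℝ}

/-! #### Entry facts about `isoPRB` -/

lemma iso1_err {x y u v : B} {i : Fin 3} (h : errAt x y u v i) :
    isoPRB1 ε (x i) (y i) (u i) (v i) = ε / 2 := if_neg h

lemma iso1_noerr {x y u v : B} {i : Fin 3} (h : ¬ errAt x y u v i) :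
    isoPRB1 ε (x i) (y i) (u i) (v i) = (1 - ε) / 2 := if_pos (not_not.mp h)

lemma isoPRB1_nonneg (hε : 0 ≤ ε) (hε' : ε ≤ 1) (x y u v : Bool) :
    0 ≤ isoPRB1 ε x y u v := by
  unfold isoPRB1; split <;> linarith

lemma isoPRB1_sum_x (y u v : Bool) :
    ∑ x : Bool, isoPRB1 ε x y u v = 1 / 2 := by
  rw [Fintype.sum_bool]
  cases y <;> cases u <;> cases v <;> simp [isoPRB1] <;> ring

lemma isoPRB1_sum_y (x u v : Bool) :
    ∑ y : Bool, isoPRB1 ε x y u v = 1 / 2 := by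
  rw [Fintype.sum_bool]
  cases x <;> cases u <;> cases v <;> simp [isoPRB1] <;> ring

lemma sum_pi_prod (F : Fin 3 → Bool → ℝ) :
    ∑ x : B, ∏ i, F i (x i) = ∏ i, ∑ b, F i b := by
  rw [Finset.prod_univ_sum, Fintype.piFinset_univ]

lemma isoPRB_sum_x (y u v : B) : ∑ x : B, isoPRB 3 ε x y u v = 1 / 8 := by
  unfold isoPRB
  rw [sum_pi_prod (fun i b => isoPRB1 ε b (y i) (u i) (v i)), Fin.prod_univ_three,
    isoPRB1_sum_x, isoPRB1_sum_x, isoPRB1_sum_x]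
  norm_num

lemma isoPRB_sum_y (x u v : B) : ∑ y : B, isoPRB 3 ε x y u v = 1 / 8 := by
  unfold isoPRB
  rw [sum_pi_prod (fun i b => isoPRB1 ε (x i) b (u i) (v i)), Fin.prod_univ_three,
    isoPRB1_sum_y, isoPRB1_sum_y, isoPRB1_sum_y]
  norm_num

lemma card_B : (Finset.univ : Finset B).card = 8 := by decide

lemma isoPRB_sum (u v : B) : ∑ x : B, ∑ y : B, isoPRB 3 ε x y u v = 1 := by
  have h : ∀ x : B, ∑ y : B, isoPRB 3 ε x y u v = 1 / 8 := fun x => isoPRB_sum_y x u v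
  rw [Finset.sum_congr rfl (fun x _ => h x), Finset.sum_const, card_B]
  norm_num

lemma isoPRB_nonneg (hε : 0 ≤ ε) (hε' : ε ≤ 1) (x y u v : B) :
    0 ≤ isoPRB 3 ε x y u v :=
  Finset.prod_nonneg fun _ _ => isoPRB1_nonneg hε hε' _ _ _ _

lemma isoPRB_isBox (hε : 0 ≤ ε) (hε' : ε ≤ 1) : IsBox (isoPRB 3 ε) :=
  ⟨fun x y u v => isoPRB_nonneg hε hε' x y u v, fun u v => isoPRB_sum u v⟩

lemma isoPRB_ns : NonSignalling (isoPRB 3 ε) := by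
  constructor
  · intro y v u u'; rw [isoPRB_sum_x, isoPRB_sum_x]
  · intro x u v v'; rw [isoPRB_sum_y, isoPRB_sum_y]

/-! #### `detBox` facts -/

lemma detBox_sum_x (f g : B → B) (y u v : B) :
    ∑ x : B, detBox f g x y u v = if y = g v then 1 else 0 := by
  by_cases hy : y = g v
  · simp [detBox, hy]
  · simp [detBox, hy]

lemma detBox_sum_y (f g : B → B) (x u v : B) :
    ∑ y : B, detBox f g x y u v = if x = f u then 1 else 0 := by
  by_cases hx : x = f u
  · simp [detBox, hx]
  · simp [detBox, hx]

lemma detBox_nonneg (f g : B → B) (x y u v : B) : 0 ≤ detBox f g x y u v := by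
  unfold detBox; split <;> norm_num

lemma detBox_isBox (f g : B → B) : IsBox (detBox f g) := by
  refine ⟨detBox_nonneg f g, fun u v => ?_⟩
  have h : ∀ x : B, ∑ y : B, detBox f g x y u v = if x = f u then 1 else 0 :=
    fun x => detBox_sum_y f g x u v
  rw [Finset.sum_congr rfl (fun x _ => h x), Finset.sum_ite_eq' univ (f u) (fun _ => (1:ℝ))]
  simp

lemma detBox_isLocal (f g : B → B) : IsLocal (detBox f g) := by
  classical
  refine ⟨fun fg => if fg = (f, g) then 1 else 0,
    fun fg => by dsimp only; split <;> norm_num, ?_, ?_⟩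
  · rw [Finset.sum_ite_eq' univ (f, g) (fun _ => (1:ℝ))]; simp
  · intro x y u v
    rw [Finset.sum_congr rfl (fun fg _ => ite_mul (fg = (f,g)) (1:ℝ) 0 _)]
    simp only [one_mul, zero_mul]
    rw [Finset.sum_ite_eq' univ (f, g) (fun fg => detBox fg.1 fg.2 x y u v)]
    simp

/-! #### Entry bounds -/

lemma entry_le (hε : 0 ≤ ε) (hε4 : ε ≤ 1/4) {x y u v : B}
    (h2 : 2 ≤ errcount x y u v) : isoPRB 3 ε x y u v ≤ ε ^ 2 / 8 := by
  have hc := errcount_eq x y u v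
  have hprod : isoPRB 3 ε x y u v =
      isoPRB1 ε (x 0) (y 0) (u 0) (v 0) * isoPRB1 ε (x 1) (y 1) (u 1) (v 1) *
        isoPRB1 ε (x 2) (y 2) (u 2) (v 2) := by
    unfold isoPRB; rw [Fin.prod_univ_three]
  by_cases e0 : errAt x y u v 0 <;> by_cases e1 : errAt x y u v 1 <;>
    by_cases e2 : errAt x y u v 2 <;> simp [e0, e1, e2] at hc <;> rw [hprod]
  · rw [iso1_err e0, iso1_err e1, iso1_err e2]; nlinarith [sq_nonneg ε]
  · rw [iso1_err e0, iso1_err e1, iso1_noerr e2]; nlinarith [sq_nonneg ε]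
  · rw [iso1_err e0, iso1_noerr e1, iso1_err e2]; nlinarith [sq_nonneg ε]
  · omega
  · rw [iso1_noerr e0, iso1_err e1, iso1_err e2]; nlinarith [sq_nonneg ε]
  · omega
  · omega
  · omega

lemma entry_ge (hε : 0 ≤ ε) (hε4 : ε ≤ 1/4) {x y u v : B}
    (h2 : errcount x y u v ≤ 2) : 3/32 * ε ^ 2 ≤ isoPRB 3 ε x y u v := by
  have hc := errcount_eq x y u v
  have hprod : isoPRB 3 ε x y u v =
      isoPRB1 ε (x 0) (y 0) (u 0) (v 0) * isoPRB1 ε (x 1) (y 1) (u 1) (v 1) *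
        isoPRB1 ε (x 2) (y 2) (u 2) (v 2) := by
    unfold isoPRB; rw [Fin.prod_univ_three]
  by_cases e0 : errAt x y u v 0 <;> by_cases e1 : errAt x y u v 1 <;>
    by_cases e2 : errAt x y u v 2 <;> simp [e0, e1, e2] at hc <;> rw [hprod]
  · omega
  · rw [iso1_err e0, iso1_err e1, iso1_noerr e2]; nlinarith [sq_nonneg ε]
  · rw [iso1_err e0, iso1_noerr e1, iso1_err e2]; nlinarith [sq_nonneg ε]
  · rw [iso1_err e0, iso1_noerr e1, iso1_noerr e2]
    nlinarith [sq_nonneg ε, sq_nonneg (1-ε)]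
  · rw [iso1_noerr e0, iso1_err e1, iso1_err e2]; nlinarith [sq_nonneg ε]
  · rw [iso1_noerr e0, iso1_err e1, iso1_noerr e2]
    nlinarith [sq_nonneg ε, sq_nonneg (1-ε)]
  · rw [iso1_noerr e0, iso1_noerr e1, iso1_err e2]
    nlinarith [sq_nonneg ε, sq_nonneg (1-ε)]
  · rw [iso1_noerr e0, iso1_noerr e1, iso1_noerr e2]
    nlinarith [sq_nonneg ε, sq_nonneg (1-ε)]

/-! #### The explicit strategy for the lower bound -/

def f0 : B → B := fun u i => (!(u 0) && !(u 1) && !(u 2)) && decide (i = 0)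
def g0 : B → B := fun v _ => v 0 && v 1 && v 2

lemma f0g0_err : ∀ u v : B, errcount (f0 u) (g0 v) u v ≤ 2 := by decide

/-! #### The set defining the local part -/

def lpSet (P : Box 3) : Set ℝ :=
  {p : ℝ | 0 ≤ p ∧ p ≤ 1 ∧
    ∃ PL PNS : Box 3, IsBox PL ∧ IsLocal PL ∧ IsBox PNS ∧ NonSignalling PNS ∧
      ∀ x y u v, P x y u v = p * PL x y u v + (1 - p) * PNS x y u v}

lemma localPart_eq (P : Box 3) : localPart P = sSup (lpSet P) := rfl

lemma lpSet_bdd (P : Box 3) : BddAbove (lpSet P) := ⟨1, fun _ hp => hp.2.1⟩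

lemma zero_mem (hε : 0 ≤ ε) (hε4 : ε ≤ 1/4) : (0:ℝ) ∈ lpSet (isoPRB 3 ε) := by
  refine ⟨le_refl 0, by norm_num, detBox id id, isoPRB 3 ε, detBox_isBox id id,
    detBox_isLocal id id, isoPRB_isBox hε (by linarith), isoPRB_ns, ?_⟩
  intro x y u v; ring

/-! #### Lower bound: membership of `3/32 * ε²` -/

lemma low_mem (hε : 0 ≤ ε) (hε4 : ε ≤ 1/4) :
    3/32 * ε ^ 2 ∈ lpSet (isoPRB 3 ε) := by
  set p₀ : ℝ := 3/32 * ε ^ 2 with hp₀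
  have hε1 : ε ≤ 1 := by linarith
  have hsq : ε ^ 2 ≤ 1/16 := by nlinarith
  have hp0 : 0 ≤ p₀ := by positivity
  have hplt : p₀ < 1 := by rw [hp₀]; nlinarith
  have hne : (1 - p₀) ≠ 0 := by linarith
  have hinv : 0 ≤ (1 - p₀)⁻¹ := inv_nonneg.2 (by linarith)
  set c₂ : ℝ := -(p₀) * (1 - p₀)⁻¹ with hc₂
  set PNS : Box 3 := fun x y u v =>
    (1 - p₀)⁻¹ * isoPRB 3 ε x y u v + c₂ * detBox f0 g0 x y u v with hPNS
  have hnum : ∀ x y u v : B,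
      0 ≤ isoPRB 3 ε x y u v - p₀ * detBox f0 g0 x y u v := by
    intro x y u v
    by_cases h : x = f0 u ∧ y = g0 v
    · obtain ⟨hx, hy⟩ := h
      subst hx; subst hy
      have hg := entry_ge hε hε4 (f0g0_err u v)
      have hd : detBox f0 g0 (f0 u) (g0 v) u v = 1 := if_pos ⟨rfl, rfl⟩
      rw [hd]; rw [hp₀]; linarith
    · have hd : detBox f0 g0 x y u v = 0 := if_neg h
      rw [hd]
      have := isoPRB_nonneg hε hε1 x y u v
      linarith
  have hPNSval : ∀ x y u v : B, PNS x y u v =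
      (isoPRB 3 ε x y u v - p₀ * detBox f0 g0 x y u v) * (1 - p₀)⁻¹ := by
    intro x y u v; rw [hPNS, hc₂]; ring
  refine ⟨hp0, by linarith, detBox f0 g0, PNS, detBox_isBox f0 g0,
    detBox_isLocal f0 g0, ⟨?_, ?_⟩, ⟨?_, ?_⟩, ?_⟩
  · -- nonneg of PNS
    intro x y u v
    rw [hPNSval]
    exact mul_nonneg (hnum x y u v) hinv
  · -- sums to 1
    intro u v
    have hsum : ∀ x : B, ∑ y : B, PNS x y u v =
        (1 - p₀)⁻¹ * (∑ y : B, isoPRB 3 ε x y u v) +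
          c₂ * (∑ y : B, detBox f0 g0 x y u v) := by
      intro x
      rw [hPNS]
      rw [Finset.sum_add_distrib, Finset.mul_sum, Finset.mul_sum]
    rw [Finset.sum_congr rfl (fun x _ => hsum x)]
    rw [Finset.sum_add_distrib, ← Finset.mul_sum, ← Finset.mul_sum]
    rw [isoPRB_sum, (detBox_isBox f0 g0).2 u v]
    rw [hc₂]
    field_simp
    ring
  · -- non-signalling, Alice side
    intro y v u u'
    have hmarg : ∀ u'' : B, ∑ x : B, PNS x y u'' v =
        (1 - p₀)⁻¹ * (1/8) + c₂ * (if y = g0 v then 1 else 0) := by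
      intro u''
      rw [hPNS]
      rw [Finset.sum_add_distrib, ← Finset.mul_sum, ← Finset.mul_sum,
        isoPRB_sum_x, detBox_sum_x]
    rw [hmarg u, hmarg u']
  · -- non-signalling, Bob side
    intro x u v v'
    have hmarg : ∀ v'' : B, ∑ y : B, PNS x y u v'' =
        (1 - p₀)⁻¹ * (1/8) + c₂ * (if x = f0 u then 1 else 0) := by
      intro v''
      rw [hPNS]
      rw [Finset.sum_add_distrib, ← Finset.mul_sum, ← Finset.mul_sum,
        isoPRB_sum_y, detBox_sum_y]
    rw [hmarg v, hmarg v']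
  · -- decomposition identity
    intro x y u v
    rw [hPNS, hc₂]
    field_simp
    ring

/-! #### Upper bound -/

abbrev Z := B × B × B × B

def cnd (z : Z) : Prop := 2 ≤ errcount z.1 z.2.1 z.2.2.1 z.2.2.2

instance : DecidablePred cnd := fun z => by unfold cnd; infer_instance

noncomputable def T (Q : Box 3) : ℝ :=
  ∑ z : Z, if cnd z then Q z.1 z.2.1 z.2.2.1 z.2.2.2 else 0

lemma T_nonneg {Q : Box 3} (h : ∀ x y u v, 0 ≤ Q x y u v) : 0 ≤ T Q :=
  Finset.sum_nonneg fun z _ => by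
    by_cases hc : cnd z
    · rw [if_pos hc]; exact h _ _ _ _
    · rw [if_neg hc]

lemma T_det_ge_one (f g : B → B) : 1 ≤ T (detBox f g) := by
  obtain ⟨u, v, huv⟩ := keyLemma f g
  have hterm :
      (if cnd ((f u, g v, u, v) : Z) then
        detBox f g (f u) (g v) u v else 0) = 1 := by
    rw [if_pos (show cnd ((f u, g v, u, v) : Z) from huv)]
    exact if_pos ⟨rfl, rfl⟩
  calc (1:ℝ) = if cnd ((f u, g v, u, v) : Z) then detBox f g (f u) (g v) u v else 0 :=
        hterm.symm
    _ ≤ T (detBox f g) := by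
        refine Finset.single_le_sum (f := fun z : Z =>
          if cnd z then detBox f g z.1 z.2.1 z.2.2.1 z.2.2.2 else 0) ?_ (mem_univ _)
        intro z _
        show (0:ℝ) ≤ if cnd z then detBox f g z.1 z.2.1 z.2.2.1 z.2.2.2 else 0
        by_cases hc : cnd z
        · rw [if_pos hc]; exact detBox_nonneg f g _ _ _ _
        · rw [if_neg hc]

lemma card_Z : (Finset.univ : Finset Z).card = 4096 := by
  have hB : Fintype.card B = 8 := by decide
  rw [Finset.card_univ]
  show Fintype.card (B × B × B × B) = 4096
  rw [Fintype.card_prod, Fintype.card_prod, Fintype.card_prod, hB]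

lemma T_iso_le (hε : 0 ≤ ε) (hε4 : ε ≤ 1/4) : T (isoPRB 3 ε) ≤ 512 * ε ^ 2 := by
  have hterm : ∀ z : Z,
      (if cnd z then isoPRB 3 ε z.1 z.2.1 z.2.2.1 z.2.2.2 else 0) ≤ ε ^ 2 / 8 := by
    intro z
    split
    · exact entry_le hε hε4 (by assumption)
    · positivity
  calc T (isoPRB 3 ε) ≤ ∑ _z : Z, ε ^ 2 / 8 := Finset.sum_le_sum fun z _ => hterm z
    _ = 4096 * (ε ^ 2 / 8) := by rw [Finset.sum_const, card_Z, nsmul_eq_mul]; norm_num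
    _ = 512 * ε ^ 2 := by ring

lemma T_local_ge {PL : Box 3} (h : IsLocal PL) : 1 ≤ T PL := by
  obtain ⟨w, hw0, hw1, hrep⟩ := h
  have e1 : ∀ z : Z, (if cnd z then PL z.1 z.2.1 z.2.2.1 z.2.2.2 else 0) =
      ∑ fg : (B → B) × (B → B),
        (if cnd z then w fg * detBox fg.1 fg.2 z.1 z.2.1 z.2.2.1 z.2.2.2 else 0) := by
    intro z
    by_cases h : cnd z
    · rw [if_pos h, hrep]
      exact Finset.sum_congr rfl fun fg _ => (if_pos h).symm
    · rw [if_neg h]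
      rw [Finset.sum_congr rfl fun fg _ => if_neg h]
      rw [Finset.sum_const, smul_zero]
  have e2 : T PL = ∑ fg : (B → B) × (B → B), w fg * T (detBox fg.1 fg.2) := by
    unfold T
    rw [Finset.sum_congr rfl fun z _ => e1 z, Finset.sum_comm]
    refine Finset.sum_congr rfl fun fg _ => ?_
    rw [Finset.mul_sum]
    refine Finset.sum_congr rfl fun z _ => ?_
    by_cases h : cnd z
    · rw [if_pos h, if_pos h]
    · rw [if_neg h, if_neg h, mul_zero]
  rw [e2, ← hw1]
  refine Finset.sum_le_sum fun fg _ => ?_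
  calc w fg = w fg * 1 := (mul_one _).symm
    _ ≤ w fg * T (detBox fg.1 fg.2) :=
        mul_le_mul_of_nonneg_left (T_det_ge_one fg.1 fg.2) (hw0 fg)

lemma upper (hε : 0 ≤ ε) (hε4 : ε ≤ 1/4) {p : ℝ}
    (hp : p ∈ lpSet (isoPRB 3 ε)) : p ≤ 512 * ε ^ 2 := by
  obtain ⟨hp0, hp1, PL, PNS, _, hlocL, hbNS, _, heq⟩ := hp
  have hTeq : T (isoPRB 3 ε) = p * T PL + (1 - p) * T PNS := by
    unfold T
    have hz : ∀ z : Z, (if cnd z then isoPRB 3 ε z.1 z.2.1 z.2.2.1 z.2.2.2 else 0) =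
        p * (if cnd z then PL z.1 z.2.1 z.2.2.1 z.2.2.2 else 0) +
          (1 - p) * (if cnd z then PNS z.1 z.2.1 z.2.2.1 z.2.2.2 else 0) := by
      intro z
      by_cases h : cnd z
      · rw [if_pos h, if_pos h, if_pos h]; exact heq _ _ _ _
      · rw [if_neg h, if_neg h, if_neg h]; ring
    rw [Finset.sum_congr rfl fun z _ => hz z, Finset.sum_add_distrib,
      ← Finset.mul_sum, ← Finset.mul_sum]
  have h1 : 1 ≤ T PL := T_local_ge hlocL
  have h2 : 0 ≤ T PNS := T_nonneg hbNS.1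
  have h3 : T (isoPRB 3 ε) ≤ 512 * ε ^ 2 := T_iso_le hε hε4
  nlinarith

end S8

/-- the local part of three isotropic ε-PRBs is `Θ(ε²)`. -/
theorem stmt8 :
    ∃ c₁ > (0 : ℝ), ∃ c₂ > (0 : ℝ), ∀ ε : ℝ, 0 ≤ ε → ε ≤ 1 / 4 →
      c₁ * ε ^ 2 ≤ localPart (isoPRB 3 ε) ∧ localPart (isoPRB 3 ε) ≤ c₂ * ε ^ 2 := by
  refine ⟨3/32, by norm_num, 512, by norm_num, fun ε hε hε4 => ?_⟩
  rw [S8.localPart_eq]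
  constructor
  · exact le_csSup (S8.lpSet_bdd _) (S8.low_mem hε hε4)
  · exact csSup_le ⟨0, S8.zero_mem hε hε4⟩ fun p hp => S8.upper hε hε4 hp
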